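/- Let T be a T_7-free tournament and let z be any vertex of T. Then V_3(z) is 2-in-dominated by V_2(z): there exist at most two vertices a, b ∈ V_2(z) such that every v ∈ V_3(z) satisfies v→a or v→b. -/

import Mathlib

/-- A tournament on vertex set `V`: an irreflexive relation such that for
all distinct `u, v` exactly one of `u→v` and `v→u` holds. -/
def IsTournament {V : Type*} (r : V → V → Prop) : Prop :=
  (∀ v, ¬ r v v) ∧ ∀ u v : V, u ≠ v → (r u v ↔ ¬ r v u)

/-- The restriction of `r` to the vertex set `X` is a transitive relation. -/
def TransOn {V : Type*} (r : V → V → Prop) (X : Finset V) : Prop :=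
  ∀ x ∈ X, ∀ y ∈ X, ∀ z ∈ X, r x y → r y z → r x z

/-- There is a directed walk of length `k` from `v` to `z`. -/
def ReachLen {V : Type*} (r : V → V → Prop) (v z : V) (k : ℕ) : Prop :=
  ∃ f : Fin (k + 1) → V, f 0 = v ∧ f (Fin.last k) = z ∧
    ∀ i : Fin k, r (f i.castSucc) (f i.succ)

/-- The layer `V_ℓ(z)`: vertices whose shortest directed path to `z` has length
exactly `ℓ - 1`. -/
def layer {V : Type*} (r : V → V → Prop) (z : V) (ℓ : ℕ) : Set V :=
  {v | ReachLen r v z (ℓ - 1) ∧ ∀ m < ℓ - 1, ¬ ReachLen r v z m}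

/-- `Z` 2-in-dominates `S`: some subset `Z' ⊆ Z` with `|Z'| ≤ 2` in-dominates `S`,
i.e. every `s ∈ S` has an arc `s → z'` to some `z' ∈ Z'`. -/
def TwoInDominates {V : Type*} (r : V → V → Prop) (Z S : Set V) : Prop :=
  ∃ Z' : Set V, Z' ⊆ Z ∧ Z'.ncard ≤ 2 ∧ ∀ s ∈ S, ∃ z' ∈ Z', r s z'

/-- The set `A` induces a `T_5`-free subtournament: every 5-element subset of `A`
contains a 4-element transitive subset. -/
def T5FreeOn {V : Type*} (r : V → V → Prop) (A : Set V) : Prop :=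
  ∀ X : Finset V, (↑X : Set V) ⊆ A → X.card = 5 →
    ∃ Y ⊆ X, Y.card = 4 ∧ TransOn r Y

/-- The tournament is `T_7`-free: every 7-element vertex subset contains a 5-element
transitive subset. -/
def T7Free {V : Type*} (r : V → V → Prop) : Prop :=
  ∀ Q : Finset V, Q.card = 7 → ∃ X ⊆ Q, X.card = 5 ∧ TransOn r X

private lemma reach_zero {V : Type*} {r : V → V → Prop} {v z : V} :
    ReachLen r v z 0 ↔ v = z := by
  constructor
  · rintro ⟨f, h0, h1, -⟩
    rw [← h0, ← h1]
    exact congrArg f (by decide)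
  · intro h
    exact ⟨fun _ => v, rfl, h, fun i => i.elim0⟩

private lemma reach_one {V : Type*} {r : V → V → Prop} {v z : V} :
    ReachLen r v z 1 ↔ r v z := by
  constructor
  · rintro ⟨f, h0, h1, h⟩
    have h2 := h 0
    rw [show ((0 : Fin 1).castSucc) = (0 : Fin 2) from rfl,
      show ((0 : Fin 1).succ) = Fin.last 1 from rfl, h0, h1] at h2
    exact h2
  · intro h
    refine ⟨fun i => if i = 0 then v else z, if_pos rfl, if_neg (by decide), fun i => ?_⟩
    fin_cases i
    simpa using h

private lemma reach_two {V : Type*} {r : V → V → Prop} {v z : V}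
    (h : ReachLen r v z 2) : ∃ w, r v w ∧ r w z := by
  obtain ⟨f, h0, h1, h⟩ := h
  refine ⟨f 1, ?_, ?_⟩
  · have h2 := h 0
    rwa [show ((0 : Fin 2).castSucc) = (0 : Fin 3) from rfl,
      show ((0 : Fin 2).succ) = (1 : Fin 3) from rfl, h0] at h2
  · have h2 := h 1
    rwa [show ((1 : Fin 2).castSucc) = (1 : Fin 3) from rfl,
      show ((1 : Fin 2).succ) = Fin.last 2 from rfl, h1] at h2

set_option maxHeartbeats 3200000 in
/-- in a `T_7`-free tournament, for every vertex `z`, the set `V_3(z)`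
is 2-in-dominated by `V_2(z)`. -/
theorem stmt14 {V : Type*} [Fintype V] [DecidableEq V]
    (r : V → V → Prop) (hT : IsTournament r) (h7 : T7Free r) (z : V) :
    TwoInDominates r (layer r z 2) (layer r z 3) := by
  classical
  obtain ⟨hirr, hconn⟩ := hT
  by_contra hcon
  have hne_of_r : ∀ x y : V, r x y → x ≠ y := by
    rintro x y h rfl; exact hirr x h
  have hlayer2 : ∀ a, r a z → a ∈ layer r z 2 := by
    intro a ha
    simp only [layer, Set.mem_setOf_eq]
    refine ⟨reach_one.mpr ha, ?_⟩
    intro m hm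
    have hm0 : m = 0 := by omega
    subst hm0
    intro h0
    exact hirr z (reach_zero.mp h0 ▸ ha)
  have hB : ∀ v ∈ layer r z 3, (¬ r v z) ∧ v ≠ z ∧ ∃ w, r v w ∧ r w z := by
    intro v hv
    simp only [layer, Set.mem_setOf_eq] at hv
    obtain ⟨h2, hmin⟩ := hv
    refine ⟨?_, ?_, reach_two h2⟩
    · intro hvz; exact hmin 1 (by omega) (reach_one.mpr hvz)
    · intro hvz; exact hmin 0 (by omega) (reach_zero.mpr hvz)
  have hneg : ∀ Z' : Set V, Z' ⊆ layer r z 2 → Z'.ncard ≤ 2 →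
      ∃ s ∈ layer r z 3, ∀ y ∈ Z', ¬ r s y := by
    intro Z' h1 h2
    by_contra hx
    push_neg at hx
    exact hcon ⟨Z', h1, h2, hx⟩
  have hpair : ∀ a b : V, r a z → r b z → ∃ v ∈ layer r z 3, r a v ∧ r b v := by
    intro a b ha hb
    obtain ⟨s, hs, hforall⟩ := hneg {a, b}
      (by rintro y (rfl | rfl); exacts [hlayer2 _ ha, hlayer2 _ hb])
      ((Set.ncard_insert_le a {b}).trans (by simp))
    have hsz := (hB s hs).1
    refine ⟨s, hs, ?_, ?_⟩
    · have h1 := hforall a (by simp)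
      have hne : a ≠ s := by rintro rfl; exact hsz ha
      exact (hconn a s hne).mpr h1
    · have h1 := hforall b (by simp)
      have hne : b ≠ s := by rintro rfl; exact hsz hb
      exact (hconn b s hne).mpr h1
  -- out-neighbourhoods in V_2
  let N : V → Finset V := fun v => Finset.univ.filter fun a => r v a ∧ r a z
  have hNmem : ∀ v a, a ∈ N v ↔ r v a ∧ r a z := by
    intro v a; simp [N]
  have hNne : ∀ v ∈ layer r z 3, (N v).Nonempty := by
    intro v hv
    obtain ⟨-, -, w, hw1, hw2⟩ := hB v hv
    exact ⟨w, (hNmem v w).mpr ⟨hw1, hw2⟩⟩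
  have hA_ne_B : ∀ a v, r a z → v ∈ layer r z 3 → a ≠ v := by
    rintro a v ha hv rfl; exact (hB a hv).1 ha
  let Bf : Finset V := Finset.univ.filter fun v => v ∈ layer r z 3
  have hBfmem : ∀ v, v ∈ Bf ↔ v ∈ layer r z 3 := by intro v; simp [Bf]
  obtain ⟨v0, hv0B, -⟩ := hneg ∅ (by simp) (by simp)
  have hBfne : Bf.Nonempty := ⟨v0, (hBfmem v0).mpr hv0B⟩
  -- v1 : minimal |N v| over B
  obtain ⟨v1, hv1Bf, hv1min⟩ := Finset.exists_min_image Bf (fun v => (N v).card) hBfne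
  have hv1B : v1 ∈ layer r z 3 := (hBfmem v1).mp hv1Bf
  obtain ⟨a1, ha1N⟩ := hNne v1 hv1B
  have hv1a1 : r v1 a1 := ((hNmem _ _).mp ha1N).1
  have ha1z : r a1 z := ((hNmem _ _).mp ha1N).2
  -- F : elements of B dominated by a1 ; v2 minimizes |N w \ N v1| over F
  let F : Finset V := Bf.filter fun w => r a1 w
  obtain ⟨w2, hw2B, ha1w2, -⟩ := hpair a1 a1 ha1z ha1z
  have hFne : F.Nonempty := ⟨w2, Finset.mem_filter.mpr ⟨(hBfmem _).mpr hw2B, ha1w2⟩⟩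
  obtain ⟨v2, hv2F, hv2min⟩ := Finset.exists_min_image F (fun w => ((N w) \ (N v1)).card) hFne
  have hv2B : v2 ∈ layer r z 3 := (hBfmem _).mp (Finset.mem_filter.mp hv2F).1
  have ha1v2 : r a1 v2 := (Finset.mem_filter.mp hv2F).2
  have ha1notN2 : a1 ∉ N v2 := by
    intro h
    exact (hconn a1 v2 (hA_ne_B a1 v2 ha1z hv2B)).mp ha1v2 ((hNmem _ _).mp h).1
  have hM : ((N v2) \ (N v1)).Nonempty := by
    rw [Finset.sdiff_nonempty]
    intro hsub
    have hss : N v2 ⊂ N v1 := (Finset.ssubset_iff_of_subset hsub).mpr ⟨a1, ha1N, ha1notN2⟩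
    have h1 := Finset.card_lt_card hss
    have h2 := hv1min v2 ((hBfmem _).mpr hv2B)
    omega
  obtain ⟨a2, ha2M⟩ := hM
  have ha2N2 : a2 ∈ N v2 := (Finset.mem_sdiff.mp ha2M).1
  have ha2notN1 : a2 ∉ N v1 := (Finset.mem_sdiff.mp ha2M).2
  have hv2a2 : r v2 a2 := ((hNmem _ _).mp ha2N2).1
  have ha2z : r a2 z := ((hNmem _ _).mp ha2N2).2
  have ha2v1 : r a2 v1 := by
    refine (hconn a2 v1 (hA_ne_B a2 v1 ha2z hv1B)).mpr fun h => ?_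
    exact ha2notN1 ((hNmem _ _).mpr ⟨h, ha2z⟩)
  -- v3 : common witness for a1, a2
  obtain ⟨v3, hv3B, ha1v3, ha2v3⟩ := hpair a1 a2 ha1z ha2z
  have hkey : ∃ a3 ∈ N v3, a3 ∉ N v1 ∧ a3 ∉ N v2 := by
    by_contra hk
    push_neg at hk
    have ha2notN3 : a2 ∉ N v3 := by
      intro h
      exact (hconn a2 v3 (hA_ne_B a2 v3 ha2z hv3B)).mp ha2v3 ((hNmem _ _).mp h).1
    have hsub : (N v3) \ (N v1) ⊆ ((N v2) \ (N v1)).erase a2 := by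
      intro x hx
      obtain ⟨hx3, hx1⟩ := Finset.mem_sdiff.mp hx
      refine Finset.mem_erase.mpr ⟨?_, Finset.mem_sdiff.mpr ⟨hk x hx3 hx1, hx1⟩⟩
      rintro rfl; exact ha2notN3 hx3
    have hv3F : v3 ∈ F := Finset.mem_filter.mpr ⟨(hBfmem _).mpr hv3B, ha1v3⟩
    have h1 := hv2min v3 hv3F
    have h2 := Finset.card_le_card hsub
    rw [Finset.card_erase_of_mem ha2M] at h2
    have h3 : 0 < ((N v2) \ (N v1)).card := Finset.card_pos.mpr ⟨a2, ha2M⟩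
    omega
  obtain ⟨a3, ha3N3, ha3notN1, ha3notN2⟩ := hkey
  have hv3a3 : r v3 a3 := ((hNmem _ _).mp ha3N3).1
  have ha3z : r a3 z := ((hNmem _ _).mp ha3N3).2
  have ha3v1 : r a3 v1 := by
    refine (hconn a3 v1 (hA_ne_B a3 v1 ha3z hv1B)).mpr fun h => ?_
    exact ha3notN1 ((hNmem _ _).mpr ⟨h, ha3z⟩)
  have ha3v2 : r a3 v2 := by
    refine (hconn a3 v2 (hA_ne_B a3 v2 ha3z hv2B)).mpr fun h => ?_
    exact ha3notN2 ((hNmem _ _).mpr ⟨h, ha3z⟩)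
  -- arcs from z
  have hzv : ∀ v, v ∈ layer r z 3 → r z v := by
    intro v hv
    obtain ⟨h1, h2, -⟩ := hB v hv
    exact (hconn z v (Ne.symm h2)).mpr h1
  have hzv1 := hzv v1 hv1B
  have hzv2 := hzv v2 hv2B
  have hzv3 := hzv v3 hv3B
  -- all pairwise distinctness facts
  have d_za1 : z ≠ a1 := (hne_of_r a1 z ha1z).symm
  have d_za2 : z ≠ a2 := (hne_of_r a2 z ha2z).symm
  have d_za3 : z ≠ a3 := (hne_of_r a3 z ha3z).symm
  have d_zv1 : z ≠ v1 := hne_of_r z v1 hzv1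
  have d_zv2 : z ≠ v2 := hne_of_r z v2 hzv2
  have d_zv3 : z ≠ v3 := hne_of_r z v3 hzv3
  have d_a1a2 : a1 ≠ a2 := by rintro rfl; exact ha2notN1 ha1N
  have d_a1a3 : a1 ≠ a3 := by rintro rfl; exact ha3notN1 ha1N
  have d_a2a3 : a2 ≠ a3 := by rintro rfl; exact ha3notN2 ha2N2
  have d_a1v1 : a1 ≠ v1 := hA_ne_B a1 v1 ha1z hv1B
  have d_a1v2 : a1 ≠ v2 := hA_ne_B a1 v2 ha1z hv2B
  have d_a1v3 : a1 ≠ v3 := hA_ne_B a1 v3 ha1z hv3B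
  have d_a2v1 : a2 ≠ v1 := hA_ne_B a2 v1 ha2z hv1B
  have d_a2v2 : a2 ≠ v2 := hA_ne_B a2 v2 ha2z hv2B
  have d_a2v3 : a2 ≠ v3 := hA_ne_B a2 v3 ha2z hv3B
  have d_a3v1 : a3 ≠ v1 := hA_ne_B a3 v1 ha3z hv1B
  have d_a3v2 : a3 ≠ v2 := hA_ne_B a3 v2 ha3z hv2B
  have d_a3v3 : a3 ≠ v3 := hA_ne_B a3 v3 ha3z hv3B
  have d_v1v2 : v1 ≠ v2 := by
    have hn : ¬ r v2 a1 := (hconn a1 v2 d_a1v2).mp ha1v2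
    intro h; exact hn (h ▸ hv1a1)
  have d_v1v3 : v1 ≠ v3 := by
    have hn : ¬ r v3 a1 := (hconn a1 v3 d_a1v3).mp ha1v3
    intro h; exact hn (h ▸ hv1a1)
  have d_v2v3 : v2 ≠ v3 := by
    have hn : ¬ r v3 a2 := (hconn a2 v3 d_a2v3).mp ha2v3
    intro h; exact hn (h ▸ hv2a2)
  have d_a1z : a1 ≠ z := d_za1.symm
  have d_a2z : a2 ≠ z := d_za2.symm
  have d_a3z : a3 ≠ z := d_za3.symm
  have d_v1z : v1 ≠ z := d_zv1.symm
  have d_v2z : v2 ≠ z := d_zv2.symm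
  have d_v3z : v3 ≠ z := d_zv3.symm
  have d_a2a1 : a2 ≠ a1 := d_a1a2.symm
  have d_a3a1 : a3 ≠ a1 := d_a1a3.symm
  have d_a3a2 : a3 ≠ a2 := d_a2a3.symm
  have d_v1a1 : v1 ≠ a1 := d_a1v1.symm
  have d_v2a1 : v2 ≠ a1 := d_a1v2.symm
  have d_v3a1 : v3 ≠ a1 := d_a1v3.symm
  have d_v1a2 : v1 ≠ a2 := d_a2v1.symm
  have d_v2a2 : v2 ≠ a2 := d_a2v2.symm
  have d_v3a2 : v3 ≠ a2 := d_a2v3.symm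
  have d_v1a3 : v1 ≠ a3 := d_a3v1.symm
  have d_v2a3 : v2 ≠ a3 := d_a3v2.symm
  have d_v3a3 : v3 ≠ a3 := d_a3v3.symm
  have d_v2v1 : v2 ≠ v1 := d_v1v2.symm
  have d_v3v1 : v3 ≠ v1 := d_v1v3.symm
  have d_v3v2 : v3 ≠ v2 := d_v2v3.symm
  -- the 7-element configuration
  set S : Finset V := {z, a1, a2, a3, v1, v2, v3} with hSdef
  have hScard : S.card = 7 := by
    rw [hSdef]
    rw [Finset.card_insert_of_notMem (by
      simp [d_za1, d_za2, d_za3, d_zv1, d_zv2, d_zv3])]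
    rw [Finset.card_insert_of_notMem (by
      simp [d_a1a2, d_a1a3, d_a1v1, d_a1v2, d_a1v3])]
    rw [Finset.card_insert_of_notMem (by
      simp [d_a2a3, d_a2v1, d_a2v2, d_a2v3])]
    rw [Finset.card_insert_of_notMem (by
      simp [d_a3v1, d_a3v2, d_a3v3])]
    rw [Finset.card_insert_of_notMem (by
      simp [d_v1v2, d_v1v3])]
    rw [Finset.card_insert_of_notMem (by simp [d_v2v3])]
    simp
  have hS_z : z ∈ S := by rw [hSdef]; simp
  have hS_a1 : a1 ∈ S := by rw [hSdef]; simp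
  have hS_a2 : a2 ∈ S := by rw [hSdef]; simp
  have hS_a3 : a3 ∈ S := by rw [hSdef]; simp
  have hS_v1 : v1 ∈ S := by rw [hSdef]; simp
  have hS_v2 : v2 ∈ S := by rw [hSdef]; simp
  have hS_v3 : v3 ∈ S := by rw [hSdef]; simp
  obtain ⟨X, hXS, hX5, hXtr⟩ := h7 S hScard
  have tri : ∀ x y w, x ∈ X → y ∈ X → w ∈ X → r x y → r y w → r w x → False := by
    intro x y w hx hy hw h1 h2 h3
    exact (hconn w x (hne_of_r w x h3)).mp h3 (hXtr x hx y hy w hw h1 h2)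
  have quad : ∀ p q s t, p ∈ X → q ∈ X → s ∈ X → t ∈ X →
      r p q → r q s → r s t → r t p → False := by
    intro p q s t hp hq hs ht h1 h2 h3 h4
    exact tri p s t hp hs ht (hXtr p hp q hq s hs h1 h2) h3 h4
  have hsd : (S \ X).card = 2 := by rw [Finset.card_sdiff_of_subset hXS, hScard, hX5]
  obtain ⟨u, w, huw, hXP⟩ := Finset.card_eq_two.mp hsd
  have memX : ∀ x, x ∈ S → x ≠ u → x ≠ w → x ∈ X := by
    intro x hxS h1 h2
    by_contra hx
    have hmem : x ∈ S \ X := Finset.mem_sdiff.mpr ⟨hxS, hx⟩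
    rw [hXP] at hmem
    simp only [Finset.mem_insert, Finset.mem_singleton] at hmem
    tauto
  have hUsd : u ∈ S \ X := by rw [hXP]; simp
  have hWsd : w ∈ S \ X := by rw [hXP]; simp
  have hUS : u ∈ S := (Finset.mem_sdiff.mp hUsd).1
  have hUX : u ∉ X := (Finset.mem_sdiff.mp hUsd).2
  have hWS : w ∈ S := (Finset.mem_sdiff.mp hWsd).1
  have hWX : w ∉ X := (Finset.mem_sdiff.mp hWsd).2
  have hsub3 : ∀ x y t : V, x ∈ S \ X → y ∈ S \ X → t ∈ S \ X →
      x ≠ y → x ≠ t → y ≠ t → False := by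
    intro x y t hx hy ht h1 h2 h3
    have hsub : ({x, y, t} : Finset V) ⊆ S \ X := by
      intro q hq
      simp only [Finset.mem_insert, Finset.mem_singleton] at hq
      rcases hq with rfl | rfl | rfl <;> assumption
    have hc := Finset.card_le_card hsub
    rw [hsd] at hc
    rw [Finset.card_insert_of_notMem (by simp [h1, h2]),
      Finset.card_insert_of_notMem (by simp [h3]), Finset.card_singleton] at hc
    omega
  by_cases hzX : z ∈ X
  · -- some pair (v_m, a_m) fully inside X : triangle z → v_m → a_m → z
    have hP : (v1 ∈ X ∧ a1 ∈ X) ∨ (v2 ∈ X ∧ a2 ∈ X) ∨ (v3 ∈ X ∧ a3 ∈ X) := by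
      by_contra hq
      have e1 : v1 ∉ X ∨ a1 ∉ X := by
        by_cases h : v1 ∈ X
        · exact Or.inr fun h2 => hq (Or.inl ⟨h, h2⟩)
        · exact Or.inl h
      have e2 : v2 ∉ X ∨ a2 ∉ X := by
        by_cases h : v2 ∈ X
        · exact Or.inr fun h2 => hq (Or.inr (Or.inl ⟨h, h2⟩))
        · exact Or.inl h
      have e3 : v3 ∉ X ∨ a3 ∉ X := by
        by_cases h : v3 ∈ X
        · exact Or.inr fun h2 => hq (Or.inr (Or.inr ⟨h, h2⟩))
        · exact Or.inl h
      rcases e1 with h1 | h1 <;> rcases e2 with h2 | h2 <;> rcases e3 with h3 | h3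
      · exact hsub3 v1 v2 v3 (Finset.mem_sdiff.mpr ⟨hS_v1, h1⟩)
          (Finset.mem_sdiff.mpr ⟨hS_v2, h2⟩) (Finset.mem_sdiff.mpr ⟨hS_v3, h3⟩)
          d_v1v2 d_v1v3 d_v2v3
      · exact hsub3 v1 v2 a3 (Finset.mem_sdiff.mpr ⟨hS_v1, h1⟩)
          (Finset.mem_sdiff.mpr ⟨hS_v2, h2⟩) (Finset.mem_sdiff.mpr ⟨hS_a3, h3⟩)
          d_v1v2 d_v1a3 d_v2a3
      · exact hsub3 v1 a2 v3 (Finset.mem_sdiff.mpr ⟨hS_v1, h1⟩)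
          (Finset.mem_sdiff.mpr ⟨hS_a2, h2⟩) (Finset.mem_sdiff.mpr ⟨hS_v3, h3⟩)
          d_v1a2 d_v1v3 (Ne.symm d_v3a2)
      · exact hsub3 v1 a2 a3 (Finset.mem_sdiff.mpr ⟨hS_v1, h1⟩)
          (Finset.mem_sdiff.mpr ⟨hS_a2, h2⟩) (Finset.mem_sdiff.mpr ⟨hS_a3, h3⟩)
          d_v1a2 d_v1a3 d_a2a3
      · exact hsub3 a1 v2 v3 (Finset.mem_sdiff.mpr ⟨hS_a1, h1⟩)
          (Finset.mem_sdiff.mpr ⟨hS_v2, h2⟩) (Finset.mem_sdiff.mpr ⟨hS_v3, h3⟩)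
          d_a1v2 d_a1v3 d_v2v3
      · exact hsub3 a1 v2 a3 (Finset.mem_sdiff.mpr ⟨hS_a1, h1⟩)
          (Finset.mem_sdiff.mpr ⟨hS_v2, h2⟩) (Finset.mem_sdiff.mpr ⟨hS_a3, h3⟩)
          d_a1v2 d_a1a3 d_v2a3
      · exact hsub3 a1 a2 v3 (Finset.mem_sdiff.mpr ⟨hS_a1, h1⟩)
          (Finset.mem_sdiff.mpr ⟨hS_a2, h2⟩) (Finset.mem_sdiff.mpr ⟨hS_v3, h3⟩)
          d_a1a2 d_a1v3 (Ne.symm d_v3a2)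
      · exact hsub3 a1 a2 a3 (Finset.mem_sdiff.mpr ⟨hS_a1, h1⟩)
          (Finset.mem_sdiff.mpr ⟨hS_a2, h2⟩) (Finset.mem_sdiff.mpr ⟨hS_a3, h3⟩)
          d_a1a2 d_a1a3 d_a2a3
    rcases hP with ⟨h1, h2⟩ | ⟨h1, h2⟩ | ⟨h1, h2⟩
    · exact tri z v1 a1 hzX h1 h2 hzv1 hv1a1 ha1z
    · exact tri z v2 a2 hzX h1 h2 hzv2 hv2a2 ha2z
    · exact tri z v3 a3 hzX h1 h2 hzv3 hv3a3 ha3z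
  · -- z ∉ X : one of the three 4-cycles v_i → a_i → v_j → a_j → v_i lies in X
    have hzsd : z ∈ S \ X := Finset.mem_sdiff.mpr ⟨hS_z, hzX⟩
    rw [hXP] at hzsd
    simp only [Finset.mem_insert, Finset.mem_singleton] at hzsd
    have main : ∀ x y : V, x ≠ y → (S \ X) = {x, y} → x = z → False := by
      intro x y hxy hxyP hxz
      rw [hxz] at hxy hxyP
      have hyS : y ∈ S := by
        have hy : y ∈ S \ X := by rw [hxyP]; simp
        exact (Finset.mem_sdiff.mp hy).1
      have memX' : ∀ t, t ∈ S → t ≠ z → t ≠ y → t ∈ X := by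
        intro t htS h1 h2
        by_contra ht
        have hmem : t ∈ S \ X := Finset.mem_sdiff.mpr ⟨htS, ht⟩
        rw [hxyP] at hmem
        simp only [Finset.mem_insert, Finset.mem_singleton] at hmem
        rcases hmem with h | h
        · exact h1 h
        · exact h2 h
      rw [hSdef] at hyS
      simp only [Finset.mem_insert, Finset.mem_singleton] at hyS
      rcases hyS with rfl | rfl | rfl | rfl | rfl | rfl | rfl
      · exact absurd rfl hxy
      · exact quad v2 a2 v3 a3
          (memX' v2 hS_v2 d_v2z d_v2a1) (memX' a2 hS_a2 d_a2z d_a2a1)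
          (memX' v3 hS_v3 d_v3z d_v3a1) (memX' a3 hS_a3 d_a3z d_a3a1)
          hv2a2 ha2v3 hv3a3 ha3v2
      · exact quad v1 a1 v3 a3
          (memX' v1 hS_v1 d_v1z d_v1a2) (memX' a1 hS_a1 d_a1z d_a1a2)
          (memX' v3 hS_v3 d_v3z d_v3a2) (memX' a3 hS_a3 d_a3z d_a3a2)
          hv1a1 ha1v3 hv3a3 ha3v1
      · exact quad v1 a1 v2 a2
          (memX' v1 hS_v1 d_v1z d_v1a3) (memX' a1 hS_a1 d_a1z d_a1a3)
          (memX' v2 hS_v2 d_v2z d_v2a3) (memX' a2 hS_a2 d_a2z d_a2a3)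
          hv1a1 ha1v2 hv2a2 ha2v1
      · exact quad v2 a2 v3 a3
          (memX' v2 hS_v2 d_v2z d_v2v1) (memX' a2 hS_a2 d_a2z d_a2v1)
          (memX' v3 hS_v3 d_v3z d_v3v1) (memX' a3 hS_a3 d_a3z d_a3v1)
          hv2a2 ha2v3 hv3a3 ha3v2
      · exact quad v1 a1 v3 a3
          (memX' v1 hS_v1 d_v1z d_v1v2) (memX' a1 hS_a1 d_a1z d_a1v2)
          (memX' v3 hS_v3 d_v3z d_v3v2) (memX' a3 hS_a3 d_a3z d_a3v2)
          hv1a1 ha1v3 hv3a3 ha3v1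
      · exact quad v1 a1 v2 a2
          (memX' v1 hS_v1 d_v1z d_v1v3) (memX' a1 hS_a1 d_a1z d_a1v3)
          (memX' v2 hS_v2 d_v2z d_v2v3) (memX' a2 hS_a2 d_a2z d_a2v3)
          hv1a1 ha1v2 hv2a2 ha2v1
    rcases hzsd with hzu | hzw
    · exact main u w huw hXP hzu.symm
    · exact main w u (Ne.symm huw) (by rw [hXP]; exact Finset.pair_comm u w) hzw.symm
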